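/- For every r > 2/3, with u_b(r) the unique root of K(·;r) in (6/5, 4/3), one has D_0(r, u_b(r)) > 0 and −8/5 < μ_0(r, u_b(r)) < (3√115 − 65)/66. -/
import Mathlib

noncomputable section

/-- The cubic `K(u;r)`. -/
def Kc (u r : ℝ) : ℝ := 40*u^3 - (50*r + 169)*u^2 + (160*r + 224)*u - 120*r - 96

/-- `q_{f,+}(r) = 1 + √(r/(r + 1/10))`. -/
def qfp (r : ℝ) : ℝ := 1 + Real.sqrt (r / (r + 1/10))

/-- `q_{f,−}(r) = 1 − √(r/(r + 1/10))`. -/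
def qfm (r : ℝ) : ℝ := 1 - Real.sqrt (r / (r + 1/10))

/-- `q_{b,+}(r,u) = 1 + √((r + u − 2)/(r + 1/10))`. -/
def qbp (r u : ℝ) : ℝ := 1 + Real.sqrt ((r + u - 2) / (r + 1/10))

/-- `q_{b,−}(r,u) = 1 − √((r + u − 2)/(r + 1/10))`. -/
def qbm (r u : ℝ) : ℝ := 1 - Real.sqrt ((r + u - 2) / (r + 1/10))

/-- The singular wave-speed parameter `μ_0(r,u)`. -/
def mu0 (r u : ℝ) : ℝ :=
  (2*(2*qbm r u - qbp r u) + u*(2*qfm r - qfp r)) /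
    (qbp r u - 2*qbm r u + qfp r - 2*qfm r)

/-- The singular diffusion coefficient `D_0(r,u)`. -/
def D0 (r u : ℝ) : ℝ :=
  2*(2 - u)^2 / ((r + 1/10) * (2*qbm r u - qbp r u + 2*qfm r - qfp r)^2)

lemma hS_lem (u : ℝ) (h1 : 6/5 < u) (h2 : u < 4/3) :
    0 < -1600*u^4 + 10865*u^3 - 26098*u^2 + 25860*u - 8712 := by
  have ht1 : (0:ℝ) ≤ u - 6/5 := by linarith
  have ht2 : (0:ℝ) ≤ 2/15 - (u - 6/5) := by linarith
  nlinarith [mul_nonneg ht1 ht2, mul_nonneg (mul_nonneg ht1 ht1) ht2,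
    mul_nonneg (mul_nonneg (mul_nonneg ht1 ht1) ht1) ht1, ht1]

lemma hB3_lem (u : ℝ) (h1 : 121/100 ≤ u) (h2 : u < 4/3) :
    (0:ℝ) ≤ 13200*u^3 - 239160*u^2 + 677688*u - 491472 := by
  have ht1 : (0:ℝ) ≤ u - 121/100 := by linarith
  have ht2 : (0:ℝ) ≤ 37/300 - (u - 121/100) := by linarith
  nlinarith [mul_nonneg ht1 ht2, mul_nonneg (mul_nonneg ht1 ht1) ht1]

lemma hG4_lem (u : ℝ) (h1 : 121/100 ≤ u) (h2 : u < 4/3) :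
    (0:ℝ) < 464640*u^4 - 2773100*u^3 + 8561324/5*u^2 + 214589584/25*u - 223774896/25 := by
  have ht1 : (0:ℝ) ≤ u - 121/100 := by linarith
  have ht2 : (0:ℝ) ≤ 37/300 - (u - 121/100) := by linarith
  nlinarith [mul_nonneg ht1 ht2, mul_nonneg (mul_nonneg ht1 ht1) ht2,
    mul_nonneg (mul_nonneg (mul_nonneg ht1 ht1) ht1) ht1, ht1]

lemma hZ3_lem (u w : ℝ) (h1 : 121/100 ≤ u) (h2 : u < 4/3) (hw : 1072/100 < w) :
    0 < (464640*u^4 - 2914604*u^3 + 4276060*u^2 + 1318768*u - 3682416)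
      + (13200*u^3 - 239160*u^2 + 677688*u - 491472) * w := by
  have hB3 := hB3_lem u h1 h2
  have hG4 := hG4_lem u h1 h2
  nlinarith [mul_nonneg hB3 (by linarith : (0:ℝ) ≤ w - 1072/100)]

lemma hL_lem (u w : ℝ) (h1 : 6/5 < u) (h2 : u ≤ 121/100) (hwl : 1072/100 < w) :
    132*u^2 + 475*u - 808 + (39*u - 48)*w < 0 := by
  nlinarith [mul_nonneg (by linarith : (0:ℝ) ≤ 48 - 39*u) (by linarith : (0:ℝ) ≤ w - 1072/100),
    mul_nonneg (by linarith : (0:ℝ) ≤ 121/100 - u) (by linarith : (0:ℝ) ≤ u)]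

lemma sq_lt_bound (X Y : ℝ) (h : Y^2 < X^2) (hX : 0 < X) : -X < Y ∧ Y < X := by
  constructor <;> nlinarith [sq_nonneg (X+Y), sq_nonneg (X-Y)]

lemma pos_of_mul_pos_right' (X c : ℝ) (h : 0 < X * c) (hc : 0 < c) : 0 < X := by
  nlinarith

set_option maxHeartbeats 1000000 in
theorem stmt9 (r ub : ℝ) (hr : 2/3 < r) (hub : ub ∈ Set.Ioo (6/5 : ℝ) (4/3))
    (hK : Kc ub r = 0) :
    0 < D0 r ub ∧ -8/5 < mu0 r ub ∧ mu0 r ub < (3 * Real.sqrt 115 - 65) / 66 := by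
  obtain ⟨h1, h2⟩ := hub
  have hu1 : (0:ℝ) < ub - 1 := by linarith
  have hr1 : (0:ℝ) < r + 1/10 := by linarith
  have hrel : r * (50*ub^2 - 160*ub + 120) = 40*ub^3 - 169*ub^2 + 224*ub - 96 := by
    unfold Kc at hK; linear_combination -hK
  set a : ℝ := Real.sqrt (r/(r+1/10)) with ha_def
  set b : ℝ := Real.sqrt ((r + ub - 2)/(r+1/10)) with hb_def
  have ha0 : 0 ≤ a := Real.sqrt_nonneg _
  have hasq : a^2 = r/(r+1/10) := Real.sq_sqrt (by positivity)
  have hasq' : a^2 * (r + 1/10) = r := by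
    rw [hasq]; field_simp
  have ha1' : a^2 < 1 := by rw [hasq, div_lt_one hr1]; linarith
  have ha23' : 4/9 < a^2 := by rw [hasq, lt_div_iff₀ hr1]; linarith
  have ha1 : a < 1 := by nlinarith [ha1', ha0]
  have ha23 : 2/3 < a := by nlinarith [ha23', ha0]
  have hbval : (0:ℝ) ≤ (4 - 3*ub)/(2*(ub-1)) :=
    div_nonneg (by linarith) (by linarith)
  have hfrac : (r + ub - 2)/(r + 1/10) = ((4 - 3*ub)/(2*(ub-1)))^2 := by
    rw [div_pow, div_eq_div_iff hr1.ne' (by positivity)]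
    linear_combination (-1/10) * hrel
  have hb : b = (4 - 3*ub)/(2*(ub-1)) := by
    rw [hb_def, hfrac, Real.sqrt_sq hbval]
  have hb0 : 0 ≤ b := hb ▸ hbval
  have hbx : b * (2*(ub-1)) = 4 - 3*ub := by
    rw [hb]; field_simp
  have hd : 0 < 3*a + 3*b - 2 := by linarith
  -- algebraic relation for a
  have h10 : (r + 1/10) * (50*ub^2 - 160*ub + 120) = 4*(ub-1)^2*(10*ub - 21) := by
    linear_combination hrel
  have haN : a^2 * (4*(ub-1)^2*(21 - 10*ub)) = -(40*ub^3 - 169*ub^2 + 224*ub - 96) := by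
    linear_combination a^2 * h10 - (50*ub^2 - 160*ub + 120) * hasq' - hrel
  -- rewrite mu0 and D0
  have hmu : mu0 r ub = (2 + ub - 6*b - 3*ub*a) / (3*a + 3*b - 2) := by
    rw [ha_def, hb_def]; unfold mu0 qbp qbm qfp qfm; ring
  have hD0 : D0 r ub = 2*(2 - ub)^2 / ((r + 1/10) * (3*a + 3*b - 2)^2) := by
    rw [ha_def, hb_def]; unfold D0 qbp qbm qfp qfm; ring
  refine ⟨?_, ?_, ?_⟩
  · rw [hD0]
    exact div_pos (by nlinarith) (mul_pos hr1 (pow_pos hd 2))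
  · -- lower bound
    rw [hmu, lt_div_iff₀ hd]
    -- key polynomial fact S > 0
    have hS := hS_lem ub h1 h2
    have hXpos : 0 < 3*a*(8-5*ub)*(ub-1) := by
      have := mul_pos (mul_pos (by linarith : (0:ℝ) < 3*a) (by linarith : (0:ℝ) < 8 - 5*ub)) hu1
      linarith [this]
    have hPsq : (3*a*(8-5*ub)*(ub-1))^2 * (4*(21 - 10*ub)) =
        9*(8-5*ub)^2 * (-(40*ub^3 - 169*ub^2 + 224*ub - 96)) := by
      linear_combination (9*(8-5*ub)^2) * haN
    have hid2 : 9*(8-5*ub)^2 * (-(40*ub^3 - 169*ub^2 + 224*ub - 96)) =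
        4*(21-10*ub)*(5*ub^2-2*ub-6)^2
        + (5*ub-6)*(-1600*ub^4 + 10865*ub^3 - 26098*ub^2 + 25860*ub - 8712) := by ring
    have hstep : ((3*a*(8-5*ub)*(ub-1))^2 - (5*ub^2-2*ub-6)^2) * (4*(21-10*ub)) =
        (5*ub-6)*(-1600*ub^4 + 10865*ub^3 - 26098*ub^2 + 25860*ub - 8712) := by
      linear_combination hPsq + hid2
    have hX2Y2 : (5*ub^2 - 2*ub - 6)^2 < (3*a*(8-5*ub)*(ub-1))^2 := by
      have hpos : 0 < ((3*a*(8-5*ub)*(ub-1))^2 - (5*ub^2-2*ub-6)^2) * (4*(21-10*ub)) := by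
        rw [hstep]; exact mul_pos (by linarith) hS
      have := pos_of_mul_pos_right' _ _ hpos (by linarith)
      linarith
    have K1 : 0 < 5*ub^2 - 2*ub - 6 + 3*a*(8-5*ub)*(ub-1) := by
      have := (sq_lt_bound _ _ hX2Y2 hXpos).1
      linarith
    have hTid : (2+ub-6*b-3*ub*a + 8/5*(3*a+3*b-2)) * (5*(ub-1)) =
        5*ub^2 - 2*ub - 6 + 3*a*(8-5*ub)*(ub-1) := by
      linear_combination (-3) * hbx
    have hT : 0 < (2+ub-6*b-3*ub*a + 8/5*(3*a+3*b-2)) * (5*(ub-1)) := by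
      rw [hTid]; exact K1
    have := pos_of_mul_pos_right' _ _ hT (by linarith)
    linarith
  · -- upper bound
    rw [hmu, div_lt_div_iff₀ hd (by norm_num : (0:ℝ) < 66)]
    set w : ℝ := Real.sqrt 115 with hw_def
    have hw0 : 0 ≤ w := Real.sqrt_nonneg _
    have hw : w^2 = 115 := Real.sq_sqrt (by norm_num)
    have hwl : 10.72 < w := by nlinarith [hw, hw0]
    have hwu : w < 10.73 := by nlinarith [hw, hw0]
    have hid : ((3*w-65)*(3*a+3*b-2) - 66*(2+ub-6*b-3*ub*a)) * (2*(ub-1)) =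
        6*a*(ub-1)*(66*ub+3*w-65) - (132*ub^2+475*ub-808 + (39*ub-48)*w) := by
      linear_combination (9*w+201) * hbx
    rcases le_or_gt ub (121/100) with hcase | hcase
    · -- small u: L66 < 0
      have hL : 132*ub^2+475*ub-808 + (39*ub-48)*w < 0 := hL_lem ub w h1 hcase (by norm_num at hwl ⊢; linarith)
      have hterm : 0 < 6*a*(ub-1)*(66*ub+3*w-65) := by
        have := mul_pos (mul_pos (by linarith : (0:ℝ) < 6*a) hu1)
          (by nlinarith : (0:ℝ) < 66*ub+3*w-65)
        linarith [this]
      have hG2 : 0 < ((3*w-65)*(3*a+3*b-2) - 66*(2+ub-6*b-3*ub*a)) * (2*(ub-1)) := by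
        rw [hid]; linarith
      have := pos_of_mul_pos_right' _ _ hG2 (by linarith)
      linarith
    · -- large u: squared inequality
      have hZ3 : 0 < (464640*ub^4 - 2914604*ub^3 + 4276060*ub^2 + 1318768*ub - 3682416)
          + (13200*ub^3 - 239160*ub^2 + 677688*ub - 491472) * w :=
        hZ3_lem ub w (le_of_lt hcase) h2 (by norm_num at hwl ⊢; linarith)
      have hZ : 0 < 9*(-(40*ub^3 - 169*ub^2 + 224*ub - 96))*(66*ub+3*w-65)^2
          - (21-10*ub)*(132*ub^2+475*ub-808 + (39*ub-48)*w)^2 := by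
        have hfac : 0 < (4-3*ub)*((464640*ub^4 - 2914604*ub^3 + 4276060*ub^2 + 1318768*ub - 3682416)
            + (13200*ub^3 - 239160*ub^2 + 677688*ub - 491472) * w) :=
          mul_pos (by linarith) hZ3
        have hZid : 9*(-(40*ub^3 - 169*ub^2 + 224*ub - 96))*(66*ub+3*w-65)^2
            - (21-10*ub)*(132*ub^2+475*ub-808 + (39*ub-48)*w)^2 =
            (4-3*ub)*((464640*ub^4 - 2914604*ub^3 + 4276060*ub^2 + 1318768*ub - 3682416)
            + (13200*ub^3 - 239160*ub^2 + 677688*ub - 491472) * w) := by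
          linear_combination (11970*ub^3 - 55692*ub^2 + 83520*ub - 40608) * hw
        rw [hZid]; exact hfac
      have hRsq : (132*ub^2+475*ub-808 + (39*ub-48)*w)^2 < (6*a*(ub-1)*(66*ub+3*w-65))^2 := by
        have hX2 : (6*a*(ub-1))^2*(21-10*ub) = 9*(-(40*ub^3 - 169*ub^2 + 224*ub - 96)) := by
          linear_combination 9 * haN
        have hR21 : (6*a*(ub-1)*(66*ub+3*w-65))^2 * (21-10*ub) =
            9*(-(40*ub^3 - 169*ub^2 + 224*ub - 96))*(66*ub+3*w-65)^2 := by
          linear_combination (66*ub+3*w-65)^2 * hX2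
        have h21 : (0:ℝ) < 21 - 10*ub := by linarith
        have h5 : ((6*a*(ub-1)*(66*ub+3*w-65))^2 - (132*ub^2+475*ub-808 + (39*ub-48)*w)^2)
            * (21-10*ub) =
            9*(-(40*ub^3 - 169*ub^2 + 224*ub - 96))*(66*ub+3*w-65)^2
            - (21-10*ub)*(132*ub^2+475*ub-808 + (39*ub-48)*w)^2 := by
          linear_combination hR21
        have h6 : 0 < ((6*a*(ub-1)*(66*ub+3*w-65))^2
            - (132*ub^2+475*ub-808 + (39*ub-48)*w)^2) * (21-10*ub) := by
          rw [h5]; exact hZ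
        have := pos_of_mul_pos_right' _ _ h6 h21
        linarith
      have hRpos : 0 < 6*a*(ub-1)*(66*ub+3*w-65) := by
        have := mul_pos (mul_pos (by linarith : (0:ℝ) < 6*a) hu1)
          (by nlinarith : (0:ℝ) < 66*ub+3*w-65)
        linarith [this]
      have hdiff : 0 < 6*a*(ub-1)*(66*ub+3*w-65) - (132*ub^2+475*ub-808 + (39*ub-48)*w) := by
        have := (sq_lt_bound _ _ hRsq hRpos).2
        linarith
      have hG2 : 0 < ((3*w-65)*(3*a+3*b-2) - 66*(2+ub-6*b-3*ub*a)) * (2*(ub-1)) := by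
        rw [hid]; linarith
      have := pos_of_mul_pos_right' _ _ hG2 (by linarith)
      linarith
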